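/- Assume Condition (C) and let ε > 0. Then there exist a symmetric positive definite N×N real matrix Γ and a constant κ > 0 such that for every u ∈ ℝ^N with nonnegative entries and every X ∈ ℝ^N, ⟨X, Γ A^ε(u) X⟩ ≥ κ‖X‖₂². -/

import Mathlib

open Finset Matrix

set_option maxHeartbeats 1000000

/-- `B^ε_n(u) = (ε + f(n) Σ_k u_k) / (ε + Σ_k f(k) u_k)`. -/
noncomputable def Bv (N : ℕ) (f : Fin N → ℝ) (ε : ℝ) (u : Fin N → ℝ) (n : Fin N) : ℝ :=
  (ε + f n * ∑ k, u k) / (ε + ∑ k, f k * u k)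

/-- The matrix `A^ε(u)`. -/
noncomputable def Amat (N : ℕ) (f : Fin N → ℝ) (ε : ℝ) (u : Fin N → ℝ) :
    Matrix (Fin N) (Fin N) ℝ :=
  Matrix.of fun n k =>
    if n = k then
      Bv N f ε u n + u n * (f n * ∑ l, (f l - f n) * u l) / (ε + ∑ l, f l * u l) ^ 2
    else
      u n * (ε * (f n - f k) + f n * ∑ l, (f l - f k) * u l) / (ε + ∑ l, f l * u l) ^ 2

/-- `f_max`. -/
noncomputable def fmax (N : ℕ) (f : Fin N → ℝ) : ℝ := ⨆ n, f n

/-- `f_min`. -/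
noncomputable def fmin (N : ℕ) (f : Fin N → ℝ) : ℝ := ⨅ n, f n

/-- `f̄ = (1/N) Σ_n f(n)`. -/
noncomputable def fbar (N : ℕ) (f : Fin N → ℝ) : ℝ := (∑ n, f n) / N

/-- `β(f) = (f_max − f_min)/f_min + (1/f_min)√(Σ_n (f(n) − f̄)²)`. -/
noncomputable def betaf (N : ℕ) (f : Fin N → ℝ) : ℝ :=
  (fmax N f - fmin N f) / fmin N f +
    (1 / fmin N f) * Real.sqrt (∑ n, (f n - fbar N f) ^ 2)

/-- `κ₀ = (1/2)[N + 1 − max_k √((Σ_{n≠k} f(n))(Σ_{n≠k} 1/f(n)))]`. -/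
noncomputable def kappa0 (N : ℕ) (f : Fin N → ℝ) : ℝ :=
  (1 / 2) * (N + 1 -
    ⨆ k : Fin N, Real.sqrt ((∑ n ∈ univ.erase k, f n) * ∑ n ∈ univ.erase k, (f n)⁻¹))

/-- Proposition 2.5: under Condition (C), there exist a symmetric positive definite matrix `Γ`
and `κ > 0` such that `⟨X, Γ A^ε(u) X⟩ ≥ κ‖X‖₂²` for all nonnegative `u` and all `X`. -/
theorem exists_Gamma_coercive (N : ℕ) (hN : 2 ≤ N) (f : Fin N → ℝ) (hf : ∀ n, 0 < f n)
    (hC : min (kappa0 N f) 1 > betaf N f) (ε : ℝ) (hε : 0 < ε) :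
    ∃ Γ : Matrix (Fin N) (Fin N) ℝ, Γ.PosDef ∧
      ∃ κ : ℝ, 0 < κ ∧ ∀ u X : Fin N → ℝ, (∀ n, 0 ≤ u n) →
        X ⬝ᵥ ((Γ * Amat N f ε u) *ᵥ X) ≥ κ * ∑ n, (X n) ^ 2 := by
  haveI : Nonempty (Fin N) := ⟨⟨0, by omega⟩⟩
  obtain ⟨i0, hi0⟩ := Finite.exists_min f
  obtain ⟨i1, hi1⟩ := Finite.exists_max f
  set m := f i0 with hm_def
  set M := f i1 with hM_def
  have hm0 : 0 < m := hf i0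
  have hM0 : 0 < M := hf i1
  have hmM : m ≤ M := hi0 i1
  have hfmin : fmin N f = m :=
    le_antisymm (ciInf_le (Set.finite_range f).bddBelow i0) (le_ciInf hi0)
  have hfmax : fmax N f = M :=
    le_antisymm (ciSup_le hi1) (le_ciSup (Set.finite_range f).bddAbove i1)
  set fb := fbar N f with hfb_def
  have hNpos : (0:ℝ) < (N:ℝ) := by
    have : 0 < N := by omega
    exact_mod_cast this
  have hfbl : m ≤ fb := by
    rw [hfb_def, fbar, le_div_iff₀ hNpos]
    calc m * N = ∑ _n : Fin N, m := by
          simp [Finset.sum_const, Fintype.card_fin, mul_comm]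
      _ ≤ ∑ n, f n := Finset.sum_le_sum fun n _ => hi0 n
  have hfbu : fb ≤ M := by
    rw [hfb_def, fbar, div_le_iff₀ hNpos]
    calc (∑ n, f n) ≤ ∑ _n : Fin N, M := Finset.sum_le_sum fun n _ => hi1 n
      _ = M * N := by simp [Finset.sum_const, Fintype.card_fin, mul_comm]
  set G := Real.sqrt (∑ n, (f n - fb) ^ 2) with hG_def
  have hG0 : 0 ≤ G := Real.sqrt_nonneg _
  have hG2 : G ^ 2 = ∑ n, (f n - fb) ^ 2 :=
    Real.sq_sqrt (Finset.sum_nonneg fun n _ => sq_nonneg _)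
  -- Condition (C) gives β(f) < 1
  have hβ : (M - m) / m + (1 / m) * G < 1 := by
    have h1 : betaf N f < 1 := lt_of_lt_of_le hC (min_le_right _ _)
    rw [betaf, hfmin, hfmax, ← hfb_def, ← hG_def] at h1
    exact h1
  have hkey : M - m + G < m := by
    have hmne : m ≠ 0 := ne_of_gt hm0
    have h2 : ((M - m) + G) / m < 1 := by
      rw [add_div]
      calc (M - m) / m + G / m = (M - m) / m + (1 / m) * G := by ring
        _ < 1 := hβ
    have := (div_lt_one hm0).mp h2
    linarith
  have hGM : G * M < m ^ 2 := by
    nlinarith [sq_nonneg (M - m), mul_lt_mul_of_pos_right (show G < 2*m - M by linarith) hM0]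
  have hκt : 0 < 1 / M - G / m ^ 2 := by
    rw [sub_pos, div_lt_div_iff₀ (by positivity) hM0]
    linarith
  set κt := 1 / M - G / m ^ 2 with hκt_def
  set r := (M - m) / m with hr_def
  have hr0 : 0 ≤ r := div_nonneg (by linarith) hm0.le
  have hrm : r * m = M - m := by rw [hr_def]; field_simp
  set ρ := (1 + r ^ 2) / (2 * m ^ 2 * κt) with hρ_def
  have hρ : 0 < ρ := by positivity
  set Γ : Matrix (Fin N) (Fin N) ℝ :=
    Matrix.of (fun n k => (if n = k then (f n)⁻¹ else 0) + ρ) with hΓ_def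
  have hΓvec : ∀ x : Fin N → ℝ, ∀ n, (Γ *ᵥ x) n = (f n)⁻¹ * x n + ρ * ∑ k, x k := by
    intro x n
    simp only [hΓ_def, Matrix.mulVec, dotProduct, Matrix.of_apply, add_mul, ite_mul,
      zero_mul, Finset.sum_add_distrib, Finset.sum_ite_eq, Finset.mem_univ, if_true,
      ← Finset.mul_sum]
  clear_value m M fb G κt r ρ Γ
  refine ⟨Γ, Matrix.posDef_iff_dotProduct_mulVec.mpr ⟨?_, ?_⟩, κt / 2, by positivity, ?_⟩
  · -- Hermitian
    ext n k
    simp only [hΓ_def, Matrix.conjTranspose_apply, Matrix.of_apply, star_trivial]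
    rcases eq_or_ne n k with h | h
    · subst h; rfl
    · simp [h, Ne.symm h]
  · -- positive definiteness
    intro x hx
    obtain ⟨n₀, hn₀⟩ := Function.ne_iff.mp hx
    have hdot : dotProduct (star x) (Γ *ᵥ x)
        = ∑ n, (f n)⁻¹ * x n ^ 2 + ρ * (∑ n, x n) ^ 2 := by
      simp only [dotProduct, Pi.star_apply, star_trivial]
      calc ∑ n, x n * (Γ *ᵥ x) n
          = ∑ n, ((f n)⁻¹ * x n ^ 2 + (ρ * ∑ k, x k) * x n) :=
            Finset.sum_congr rfl (fun n _ => by rw [hΓvec x n]; ring)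
        _ = ∑ n, (f n)⁻¹ * x n ^ 2 + ∑ n, (ρ * ∑ k, x k) * x n := Finset.sum_add_distrib
        _ = _ := by rw [← Finset.mul_sum]; ring
    rw [hdot]
    have h1 : 0 < ∑ n, (f n)⁻¹ * x n ^ 2 :=
      Finset.sum_pos' (fun n _ => mul_nonneg (inv_pos.2 (hf n)).le (sq_nonneg _))
        ⟨n₀, Finset.mem_univ _,
          mul_pos (inv_pos.2 (hf n₀)) (pow_two_pos_of_ne_zero hn₀)⟩
    nlinarith [sq_nonneg (∑ n, x n)]
  · -- main coercivity estimate
    intro u X hu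
    set T := ∑ k, f k * u k with hT_def
    set D := ε + T with hD_def
    have hT0 : 0 ≤ T := Finset.sum_nonneg fun k _ => mul_nonneg (hf k).le (hu k)
    have hD0 : 0 < D := by rw [hD_def]; linarith
    have hDne : D ≠ 0 := ne_of_gt hD0
    have hDTne : ε + T ≠ 0 := by rw [← hD_def]; exact hDne
    set S := ∑ k, u k with hS_def
    have hS0 : 0 ≤ S := Finset.sum_nonneg fun k _ => hu k
    have hmS : m * S ≤ T := by
      rw [hS_def, hT_def, Finset.mul_sum]
      exact Finset.sum_le_sum fun k _ => mul_le_mul_of_nonneg_right (hi0 k) (hu k)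
    have hTM : T ≤ M * S := by
      rw [hS_def, hT_def, Finset.mul_sum]
      exact Finset.sum_le_sum fun k _ => mul_le_mul_of_nonneg_right (hi1 k) (hu k)
    set s₁ := ∑ n, X n with hs₁_def
    set W := ∑ n, X n ^ 2 with hW_def
    have hW0 : 0 ≤ W := Finset.sum_nonneg fun n _ => sq_nonneg _
    set sqW := Real.sqrt W with hsqW_def
    have hsqW0 : 0 ≤ sqW := Real.sqrt_nonneg _
    have hsqW2 : sqW ^ 2 = W := Real.sq_sqrt hW0
    have hXb : ∀ n, |X n| ≤ sqW := fun n =>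
      Real.abs_le_sqrt (Finset.single_le_sum (f := fun n => X n ^ 2)
        (fun i _ => sq_nonneg _) (Finset.mem_univ n))
    set F := ∑ n, f n * X n with hF_def
    set E := ∑ n, (f n)⁻¹ * X n ^ 2 with hE_def
    set a := ∑ n, u n * X n with ha_def
    set b := ∑ n, (f n)⁻¹ * (u n * X n) with hb_def
    set gX := ∑ n, (f n - fb) * X n with hgX_def
    set gu := ∑ n, (f n - fb) * u n with hgu_def
    -- summation helpers
    have sum_cX : ∀ α : ℝ, ∑ k, α * X k = α * s₁ := fun α => by
      rw [hs₁_def, Finset.mul_sum]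
    have sum_cfX : ∀ α : ℝ, ∑ k, α * (f k * X k) = α * F := fun α => by
      rw [hF_def, Finset.mul_sum]
    have sum_cu : ∀ α : ℝ, ∑ k, α * u k = α * S := fun α => by
      rw [hS_def, Finset.mul_sum]
    have sum_cfu : ∀ α : ℝ, ∑ k, α * (f k * u k) = α * T := fun α => by
      rw [hT_def, Finset.mul_sum]
    have sum_cuX : ∀ α : ℝ, ∑ n, α * (u n * X n) = α * a := fun α => by
      rw [ha_def, Finset.mul_sum]
    have sum_cfiuX : ∀ α : ℝ, ∑ n, α * ((f n)⁻¹ * (u n * X n)) = α * b := fun α => by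
      rw [hb_def, Finset.mul_sum]
    have sum_cfiX2 : ∀ α : ℝ, ∑ n, α * ((f n)⁻¹ * X n ^ 2) = α * E := fun α => by
      rw [hE_def, Finset.mul_sum]
    have sum_cX2 : ∀ α : ℝ, ∑ n, α * X n ^ 2 = α * W := fun α => by
      rw [hW_def, Finset.mul_sum]
    clear_value T D S s₁ W sqW F E a b gX gu
    -- structural identities
    have hCk : ∀ k : Fin N, ∑ l, (f l - f k) * u l = T - f k * S := by
      intro k
      rw [hT_def, hS_def, Finset.mul_sum, ← Finset.sum_sub_distrib]
      exact Finset.sum_congr rfl fun l _ => by ring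
    have hA : ∀ n k, Amat N f ε u n k
        = (if n = k then (ε + f n * S) / D else 0)
          + u n * (ε * (f n - f k) + f n * (T - f k * S)) / D ^ 2 := by
      intro n k
      simp only [Amat, Bv, Matrix.of_apply, ← hT_def, ← hS_def, ← hD_def]
      split_ifs with h
      · subst h; rw [hCk n]; ring
      · rw [hCk k]; ring
    have hcol : ∀ k, ∑ n, Amat N f ε u n k = 1 := by
      intro k
      rw [Finset.sum_congr rfl fun n _ => hA n k, Finset.sum_add_distrib]
      have h1 : ∑ n, (if n = k then (ε + f n * S) / D else 0) = (ε + f k * S) / D := by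
        simp
      have hpt : ∀ n ∈ (Finset.univ : Finset (Fin N)),
          u n * (ε * (f n - f k) + f n * (T - f k * S)) / D ^ 2
          = ε / D ^ 2 * (f n * u n) - ε * f k / D ^ 2 * u n
            + (T - f k * S) / D ^ 2 * (f n * u n) := fun n _ => by ring
      have h2 : ∑ n, u n * (ε * (f n - f k) + f n * (T - f k * S)) / D ^ 2
          = ε / D ^ 2 * T - ε * f k / D ^ 2 * S + (T - f k * S) / D ^ 2 * T := by
        rw [Finset.sum_congr rfl hpt, Finset.sum_add_distrib, Finset.sum_sub_distrib,
          sum_cfu, sum_cu, sum_cfu]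
      rw [h1, h2, hD_def]
      field_simp
      ring
    set Y := Amat N f ε u *ᵥ X with hY_def
    have hY : ∀ n, Y n = (ε + f n * S) / D * X n
        + (u n * (f n * D) / D ^ 2 * s₁ - u n * (ε + f n * S) / D ^ 2 * F) := by
      intro n
      simp only [hY_def, Matrix.mulVec, dotProduct]
      have hpt : ∀ k ∈ (Finset.univ : Finset (Fin N)), Amat N f ε u n k * X k
          = (if n = k then (ε + f n * S) / D * X k else 0)
            + (u n * (f n * D) / D ^ 2 * X k
               - u n * (ε + f n * S) / D ^ 2 * (f k * X k)) := by
        intro k _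
        rw [hA n k, hD_def]
        split_ifs with h
        · ring
        · ring
      rw [Finset.sum_congr rfl hpt, Finset.sum_add_distrib, Finset.sum_sub_distrib,
        sum_cX, sum_cfX, Finset.sum_ite_eq, if_pos (Finset.mem_univ n)]
    have hYsum : ∑ n, Y n = s₁ := by
      simp only [hY_def, Matrix.mulVec, dotProduct]
      rw [Finset.sum_comm]
      calc ∑ k, ∑ n, Amat N f ε u n k * X k
          = ∑ k, (∑ n, Amat N f ε u n k) * X k :=
            Finset.sum_congr rfl fun k _ => (Finset.sum_mul ..).symm
        _ = ∑ k, X k := Finset.sum_congr rfl fun k _ => by rw [hcol k, one_mul]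
        _ = s₁ := (hs₁_def).symm
    have hQ : X ⬝ᵥ ((Γ * Amat N f ε u) *ᵥ X)
        = ∑ n, (f n)⁻¹ * X n * Y n + ρ * s₁ ^ 2 := by
      rw [← Matrix.mulVec_mulVec, ← hY_def]
      show ∑ n, X n * (Γ *ᵥ Y) n = _
      have hpt : ∀ n ∈ (Finset.univ : Finset (Fin N)),
          X n * (Γ *ᵥ Y) n = (f n)⁻¹ * X n * Y n + ρ * s₁ * X n := by
        intro n _
        rw [hΓvec Y n, hYsum]
        ring
      rw [Finset.sum_congr rfl hpt, Finset.sum_add_distrib, sum_cX]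
      ring
    have hsplit : ∑ n, (f n)⁻¹ * X n * Y n
        = ε / D * E + S / D * W
          + (s₁ * D / D ^ 2 * a - ε * F / D ^ 2 * b - S * F / D ^ 2 * a) := by
      have hpt : ∀ n ∈ (Finset.univ : Finset (Fin N)), (f n)⁻¹ * X n * Y n
          = ε / D * ((f n)⁻¹ * X n ^ 2) + S / D * X n ^ 2
            + (s₁ * D / D ^ 2 * (u n * X n) - ε * F / D ^ 2 * ((f n)⁻¹ * (u n * X n))
               - S * F / D ^ 2 * (u n * X n)) := by
        intro n _
        rw [hY n]
        have hfne : f n ≠ 0 := ne_of_gt (hf n)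
        linear_combination (S / D * X n ^ 2 + s₁ * D / D ^ 2 * (u n * X n)
          - S * F / D ^ 2 * (u n * X n)) * mul_inv_cancel₀ hfne
      rw [Finset.sum_congr rfl hpt, Finset.sum_add_distrib, Finset.sum_add_distrib,
        Finset.sum_sub_distrib, Finset.sum_sub_distrib,
        sum_cfiX2, sum_cX2, sum_cuX, sum_cfiuX, sum_cuX]
    have hF' : F = fb * s₁ + gX := by
      rw [hgX_def, hF_def, hs₁_def, Finset.mul_sum, ← Finset.sum_add_distrib]
      exact Finset.sum_congr rfl fun n _ => by ring
    have hgu' : gu = T - fb * S := by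
      rw [hgu_def, hT_def, hS_def, Finset.mul_sum, ← Finset.sum_sub_distrib]
      exact Finset.sum_congr rfl fun n _ => by ring
    set H := a * D / D ^ 2 - fb * (ε * b + S * a) / D ^ 2 with hH_def
    clear_value H
    have hHeq : H = (ε * a - ε * fb * b + gu * a) / D ^ 2 := by
      rw [hH_def, hgu', hD_def]
      field_simp
      ring
    -- pointwise bounds
    have habsfb : ∀ n, |f n - fb| ≤ M - m := by
      intro n
      rw [abs_le]
      exact ⟨by linarith [hi0 n, hfbu], by linarith [hi1 n, hfbl]⟩
    have habs1 : ∀ n, |1 - fb * (f n)⁻¹| ≤ r := by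
      intro n
      have hfne : f n ≠ 0 := ne_of_gt (hf n)
      have h7 : 1 - fb * (f n)⁻¹ = (f n - fb) / f n := by field_simp
      rw [h7, abs_div, abs_of_pos (hf n), hr_def]
      exact div_le_div₀ (by linarith) (habsfb n) hm0 (hi0 n)
    have hguabs : |gu| ≤ r * T := by
      rw [hgu_def]
      calc |∑ n, (f n - fb) * u n| ≤ ∑ n, |(f n - fb) * u n| :=
            Finset.abs_sum_le_sum_abs _ _
        _ ≤ ∑ n, (M - m) * u n := by
            refine Finset.sum_le_sum fun n _ => ?_
            rw [abs_mul, abs_of_nonneg (hu n)]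
            exact mul_le_mul_of_nonneg_right (habsfb n) (hu n)
        _ = (M - m) * S := sum_cu (M - m)
        _ = r * (m * S) := by rw [← hrm]; ring
        _ ≤ r * T := mul_le_mul_of_nonneg_left hmS hr0
    have hθb : ∀ n, |ε * (1 - fb * (f n)⁻¹) + gu| ≤ r * D := by
      intro n
      calc |ε * (1 - fb * (f n)⁻¹) + gu|
          ≤ |ε * (1 - fb * (f n)⁻¹)| + |gu| := abs_add_le _ _
        _ ≤ ε * r + r * T := by
            rw [abs_mul, abs_of_pos hε]
            exact add_le_add (mul_le_mul_of_nonneg_left (habs1 n) hε.le) hguabs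
        _ = r * D := by rw [hD_def]; ring
    have hnum : ε * a - ε * fb * b + gu * a
        = ∑ n, u n * X n * (ε * (1 - fb * (f n)⁻¹) + gu) := by
      have hpt : ∀ n ∈ (Finset.univ : Finset (Fin N)),
          u n * X n * (ε * (1 - fb * (f n)⁻¹) + gu)
          = ε * (u n * X n) - ε * fb * ((f n)⁻¹ * (u n * X n)) + gu * (u n * X n) :=
        fun n _ => by ring
      rw [Finset.sum_congr rfl hpt, Finset.sum_add_distrib, Finset.sum_sub_distrib,
        sum_cuX, sum_cfiuX, sum_cuX]
    have hnumabs : |ε * a - ε * fb * b + gu * a| ≤ r * D * (S * sqW) := by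
      rw [hnum]
      calc |∑ n, u n * X n * (ε * (1 - fb * (f n)⁻¹) + gu)|
          ≤ ∑ n, |u n * X n * (ε * (1 - fb * (f n)⁻¹) + gu)| :=
            Finset.abs_sum_le_sum_abs _ _
        _ ≤ ∑ n, (sqW * (r * D)) * u n := by
            refine Finset.sum_le_sum fun n _ => ?_
            rw [abs_mul, abs_mul, abs_of_nonneg (hu n)]
            calc u n * |X n| * |ε * (1 - fb * (f n)⁻¹) + gu|
                ≤ u n * sqW * (r * D) := by
                  refine mul_le_mul (mul_le_mul_of_nonneg_left (hXb n) (hu n)) (hθb n)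
                    (abs_nonneg _) (mul_nonneg (hu n) hsqW0)
              _ = (sqW * (r * D)) * u n := by ring
        _ = (sqW * (r * D)) * S := sum_cu _
        _ = r * D * (S * sqW) := by ring
    have hmSD : m * S ≤ D := by rw [hD_def]; linarith
    have hHabs : |H| ≤ r * sqW / m := by
      rw [hHeq, abs_div, abs_of_pos (by positivity : (0:ℝ) < D ^ 2)]
      rw [div_le_div_iff₀ (by positivity) hm0]
      calc |ε * a - ε * fb * b + gu * a| * m ≤ r * D * (S * sqW) * m :=
            mul_le_mul_of_nonneg_right hnumabs hm0.le
        _ = (r * sqW * D) * (m * S) := by ring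
        _ ≤ (r * sqW * D) * D := mul_le_mul_of_nonneg_left hmSD (by positivity)
        _ = r * sqW * D ^ 2 := by ring
    have hH2 : H ^ 2 * m ^ 2 ≤ r ^ 2 * W := by
      have h9 : H ^ 2 ≤ (r * sqW / m) ^ 2 := by
        rw [← sq_abs H]
        exact pow_le_pow_left₀ (abs_nonneg _) hHabs 2
      have h10 : (r * sqW / m) ^ 2 * m ^ 2 = r ^ 2 * W := by
        rw [div_pow, div_mul_cancel₀ _ (by positivity : (m:ℝ) ^ 2 ≠ 0), mul_pow, hsqW2]
      calc H ^ 2 * m ^ 2 ≤ (r * sqW / m) ^ 2 * m ^ 2 :=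
            mul_le_mul_of_nonneg_right h9 (sq_nonneg m)
        _ = r ^ 2 * W := h10
    have hB2 : -(H ^ 2 / (4 * ρ)) ≤ s₁ * H + ρ * s₁ ^ 2 := by
      rw [neg_le, ← sub_nonneg]
      have h11 : H ^ 2 / (4 * ρ) - -(s₁ * H + ρ * s₁ ^ 2)
          = (2 * ρ * s₁ + H) ^ 2 / (4 * ρ) := by
        field_simp
        ring
      rw [h11]
      positivity
    have hB3 : H ^ 2 / (4 * ρ) ≤ κt / 2 * W := by
      have hκtne : κt ≠ 0 := ne_of_gt hκt
      have h4ρ : 4 * ρ = 2 * (1 + r ^ 2) / (m ^ 2 * κt) := by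
        rw [hρ_def]
        field_simp
        ring
      rw [h4ρ, div_div_eq_mul_div, div_le_iff₀ (by positivity : (0:ℝ) < 2 * (1 + r ^ 2))]
      have h12 : H ^ 2 * m ^ 2 * κt ≤ r ^ 2 * W * κt :=
        mul_le_mul_of_nonneg_right hH2 hκt.le
      linarith [h12, mul_nonneg hκt.le hW0,
        mul_nonneg (mul_nonneg hκt.le hW0) (sq_nonneg r)]
    have hgXabs : |gX| ≤ G * sqW := by
      have h13 : gX ^ 2 ≤ G ^ 2 * W := by
        rw [hG2, hgX_def, hW_def]
        exact Finset.sum_mul_sq_le_sq_mul_sq Finset.univ (fun n => f n - fb) X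
      calc |gX| ≤ Real.sqrt (G ^ 2 * W) := Real.abs_le_sqrt h13
        _ = G * sqW := by
            rw [Real.sqrt_mul (sq_nonneg G), Real.sqrt_sq hG0, hsqW_def]
    have hbaeq : ε * b + S * a = ∑ n, u n * X n * (ε * (f n)⁻¹ + S) := by
      have hpt : ∀ n ∈ (Finset.univ : Finset (Fin N)),
          u n * X n * (ε * (f n)⁻¹ + S)
          = ε * ((f n)⁻¹ * (u n * X n)) + S * (u n * X n) := fun n _ => by ring
      rw [Finset.sum_congr rfl hpt, Finset.sum_add_distrib, sum_cfiuX, sum_cuX]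
    have hbaabs : |ε * b + S * a| ≤ S * sqW * D / m := by
      rw [hbaeq]
      calc |∑ n, u n * X n * (ε * (f n)⁻¹ + S)|
          ≤ ∑ n, |u n * X n * (ε * (f n)⁻¹ + S)| := Finset.abs_sum_le_sum_abs _ _
        _ ≤ ∑ n, (sqW * (ε / m + S)) * u n := by
            refine Finset.sum_le_sum fun n _ => ?_
            rw [abs_mul, abs_mul, abs_of_nonneg (hu n)]
            have h15 : |ε * (f n)⁻¹ + S| = ε * (f n)⁻¹ + S :=
              abs_of_nonneg (add_nonneg (mul_nonneg hε.le (inv_pos.2 (hf n)).le) hS0)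
            rw [h15]
            have h16 : ε * (f n)⁻¹ ≤ ε / m := by
              rw [div_eq_mul_inv]
              exact mul_le_mul_of_nonneg_left (inv_anti₀ hm0 (hi0 n)) hε.le
            calc u n * |X n| * (ε * (f n)⁻¹ + S)
                ≤ u n * sqW * (ε / m + S) := by
                  refine mul_le_mul (mul_le_mul_of_nonneg_left (hXb n) (hu n))
                    (by linarith)
                    (add_nonneg (mul_nonneg hε.le (inv_pos.2 (hf n)).le) hS0)
                    (mul_nonneg (hu n) hsqW0)
              _ = (sqW * (ε / m + S)) * u n := by ring
        _ = (sqW * (ε / m + S)) * S := sum_cu _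
        _ = S * sqW * (ε + m * S) / m := by field_simp [hm0.ne']
        _ ≤ S * sqW * D / m := by
            apply (div_le_div_iff_of_pos_right hm0).mpr
            refine mul_le_mul_of_nonneg_left ?_ (by positivity)
            rw [hD_def]; linarith
    have hB4 : gX * (ε * b + S * a) / D ^ 2 ≤ G / m ^ 2 * W := by
      calc gX * (ε * b + S * a) / D ^ 2
          ≤ |gX * (ε * b + S * a) / D ^ 2| := le_abs_self _
        _ = |gX| * |ε * b + S * a| / D ^ 2 := by
            rw [abs_div, abs_mul, abs_of_pos (by positivity : (0:ℝ) < D ^ 2)]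
        _ ≤ (G * sqW) * (S * sqW * D / m) / D ^ 2 := by
            apply (div_le_div_iff_of_pos_right (by positivity : (0:ℝ) < D ^ 2)).mpr
            exact mul_le_mul hgXabs hbaabs (abs_nonneg _) (by positivity)
        _ = G * (sqW * sqW) * S / (m * D) := by
            field_simp [hm0.ne', hDne]
        _ = G * W * S / (m * D) := by
            rw [show sqW * sqW = W by rw [← hsqW2]; ring]
        _ ≤ G / m ^ 2 * W := by
            rw [div_le_iff₀ (by positivity : (0:ℝ) < m * D)]
            have h18 : G * W * (m * S) ≤ G * W * D :=
              mul_le_mul_of_nonneg_left hmSD (mul_nonneg hG0 hW0)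
            have h19 : G / m ^ 2 * W * (m * D) = G * W * D / m := by
              field_simp [hm0.ne']
            rw [h19, le_div_iff₀ hm0]
            linarith [h18]
    -- first positive term
    have hWE : W ≤ M * E := by
      rw [hW_def, hE_def, Finset.mul_sum]
      refine Finset.sum_le_sum fun n _ => ?_
      have hfne : f n ≠ 0 := ne_of_gt (hf n)
      calc X n ^ 2 = f n * ((f n)⁻¹ * X n ^ 2) := by
            rw [← mul_assoc, mul_inv_cancel₀ hfne, one_mul]
        _ ≤ M * ((f n)⁻¹ * X n ^ 2) := mul_le_mul_of_nonneg_right (hi1 n) (mul_nonneg (inv_pos.2 (hf n)).le (sq_nonneg _))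
    have hDle : D ≤ ε + M * S := by rw [hD_def]; linarith
    have hB1 : W / M ≤ ε / D * E + S / D * W := by
      have h17 : W / M ≤ (ε * E + S * W) / D := by
        rw [div_le_div_iff₀ hM0 hD0]
        linarith [mul_le_mul_of_nonneg_left hDle hW0,
          mul_le_mul_of_nonneg_left hWE hε.le]
      calc W / M ≤ (ε * E + S * W) / D := h17
        _ = ε / D * E + S / D * W := by ring
    -- assemble
    have hEq : X ⬝ᵥ ((Γ * Amat N f ε u) *ᵥ X)
        = ε / D * E + S / D * W + (s₁ * H + ρ * s₁ ^ 2)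
          - gX * (ε * b + S * a) / D ^ 2 := by
      rw [hQ, hsplit, hF', hH_def]
      ring
    rw [ge_iff_le, hEq]
    have hid : W / M - G / m ^ 2 * W = κt * W := by rw [hκt_def]; ring
    linarith [hB1, hB2, hB3, hB4, hid]
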